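/- Let n ≥ 2 and let k, i, j satisfy 1 ≤ i < k and k+1 < j ≤ n. Then τ^{n,k}_{i,j} = (s_{k−1} s_{k−2} ⋯ s_i) ∘ (s_{k+1} s_{k+2} ⋯ s_{j−1}), where all products are composed right to left. -/
import Mathlib


/-- `IsTau k hk i j w`: defining property of `τ^{n,k}_{i,j}` (0-indexed form). -/
def IsTau {n : ℕ} (k : ℕ) (hk : k + 1 < n) (i j : Fin n) (w : Equiv.Perm (Fin n)) : Prop :=
  w i = ⟨k, Nat.lt_of_succ_lt hk⟩ ∧ w j = ⟨k + 1, hk⟩ ∧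
    ∀ s t : Fin n, s < t → s ≠ i → s ≠ j → t ≠ i → t ≠ j → w s < w t

/-- The adjacent transposition `s_l = (l, l+1)` (0-indexed), interpreted as the
identity out of range. -/
def sT (n l : ℕ) : Equiv.Perm (Fin n) :=
  if h : l + 1 < n then Equiv.swap ⟨l, Nat.lt_of_succ_lt h⟩ ⟨l + 1, h⟩ else 1

/-- The product `s_a s_{a+1} ⋯ s_b`, composed right to left (identity if `b < a`). -/
def ascProd (n a b : ℕ) : Equiv.Perm (Fin n) :=
  ((List.range' a (b + 1 - a)).map (sT n)).prod

/-- The product `s_a s_{a-1} ⋯ s_b`, composed right to left (identity if `a < b`). -/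
def descProd (n a b : ℕ) : Equiv.Perm (Fin n) :=
  ((List.range' b (a + 1 - b)).reverse.map (sT n)).prod

lemma sT_apply {n l : ℕ} (h : l + 1 < n) (x : Fin n) :
    (sT n l x : ℕ) = if (x : ℕ) = l then l + 1 else if (x : ℕ) = l + 1 then l else x := by
  rw [sT, dif_pos h, Equiv.swap_apply_def]
  split_ifs <;> simp_all [Fin.ext_iff]

lemma asc_apply (n a : ℕ) : ∀ b, a ≤ b → b + 1 < n → ∀ x : Fin n,
    ((ascProd n a b) x : ℕ) =
      if (x : ℕ) < a then (x : ℕ) else if (x : ℕ) ≤ b then (x : ℕ) + 1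
      else if (x : ℕ) = b + 1 then (a : ℕ) else (x : ℕ) := by
  intro b
  induction b with
  | zero =>
      intro hab hb x
      have ha : a = 0 := by omega
      subst ha
      unfold ascProd
      rw [show 0 + 1 - 0 = 1 from rfl, List.range'_one]
      simp only [List.map_cons, List.map_nil, List.prod_cons, List.prod_nil, mul_one]
      rw [sT_apply hb]
      have := x.isLt
      split_ifs <;> omega
  | succ b IH =>
      intro hab hb x
      rcases Nat.lt_or_ge a (b + 1) with hab' | hab'
      · -- a ≤ b, use concat
        have hsplit : ascProd n a (b + 1) = ascProd n a b * sT n (b + 1) := by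
          unfold ascProd
          have h1 : b + 1 + 1 - a = (b + 1 - a) + 1 := by omega
          rw [h1, List.range'_concat]
          have h2 : a + 1 * (b + 1 - a) = b + 1 := by omega
          rw [h2, List.map_append, List.prod_append]
          simp
        rw [hsplit, Equiv.Perm.mul_apply,
          IH (by omega) (by omega) (sT n (b + 1) x), sT_apply hb x]
        have := x.isLt
        split_ifs <;> omega
      · -- a = b + 1 : singleton
        have ha : a = b + 1 := by omega
        subst ha
        unfold ascProd
        rw [show b + 1 + 1 - (b + 1) = 1 by omega, List.range'_one]
        simp only [List.map_cons, List.map_nil, List.prod_cons, List.prod_nil, mul_one]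
        rw [sT_apply hb]
        have := x.isLt
        split_ifs <;> omega

lemma desc_apply (n b : ℕ) : ∀ a, b ≤ a → a + 1 < n → ∀ x : Fin n,
    ((descProd n a b) x : ℕ) =
      if (x : ℕ) < b then (x : ℕ) else if (x : ℕ) = b then (a : ℕ) + 1
      else if (x : ℕ) ≤ a + 1 then (x : ℕ) - 1 else (x : ℕ) := by
  intro a
  induction a with
  | zero =>
      intro hba ha x
      have hb0 : b = 0 := by omega
      subst hb0
      unfold descProd
      rw [show 0 + 1 - 0 = 1 from rfl, List.range'_one]
      simp only [List.reverse_cons, List.reverse_nil, List.nil_append, List.map_cons,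
        List.map_nil, List.prod_cons, List.prod_nil, mul_one]
      rw [sT_apply ha]
      have := x.isLt
      split_ifs <;> omega
  | succ a IH =>
      intro hba ha x
      rcases Nat.lt_or_ge b (a + 1) with hba' | hba'
      · have hsplit : descProd n (a + 1) b = sT n (a + 1) * descProd n a b := by
          unfold descProd
          have h1 : a + 1 + 1 - b = (a + 1 - b) + 1 := by omega
          rw [h1, List.range'_concat]
          have h2 : b + 1 * (a + 1 - b) = a + 1 := by omega
          rw [h2, List.reverse_append, List.reverse_cons, List.reverse_nil,
            List.nil_append, List.singleton_append, List.map_cons, List.prod_cons]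
        rw [hsplit, Equiv.Perm.mul_apply, sT_apply ha, IH (by omega) (by omega) x]
        have := x.isLt
        split_ifs <;> omega
      · have hb : b = a + 1 := by omega
        subst hb
        unfold descProd
        rw [show a + 1 + 1 - (a + 1) = 1 by omega, List.range'_one]
        simp only [List.reverse_cons, List.reverse_nil, List.nil_append, List.map_cons,
          List.map_nil, List.prod_cons, List.prod_nil, mul_one]
        rw [sT_apply ha]
        have := x.isLt
        split_ifs <;> omega

open Finset in
lemma tau_unique {n k : ℕ} (hk : k + 1 < n) {i j : Fin n} (hij : i ≠ j)
    {w w' : Equiv.Perm (Fin n)} (h : IsTau k hk i j w) (h' : IsTau k hk i j w') :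
    w = w' := by
  set a : Fin n := ⟨k, Nat.lt_of_succ_lt hk⟩ with ha
  set b : Fin n := ⟨k + 1, hk⟩ with hb
  have hab : a ≠ b := by simp [ha, hb, Fin.ext_iff]
  set S : Finset (Fin n) := {i, j}ᶜ with hS
  set T : Finset (Fin n) := {a, b}ᶜ with hT
  have hScard : S.card = n - 2 := by
    rw [hS, card_compl, card_insert_of_notMem (by simpa using hij), card_singleton,
      Fintype.card_fin]
  have hTcard : T.card = n - 2 := by
    rw [hT, card_compl, card_insert_of_notMem (by simpa using hab), card_singleton,
      Fintype.card_fin]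
  have hSmem : ∀ y : Fin n, y ∈ S ↔ y ≠ i ∧ y ≠ j := by
    intro y; simp [hS, not_or]
  have hTmem : ∀ y : Fin n, y ∈ T ↔ y ≠ a ∧ y ≠ b := by
    intro y; simp [hT, not_or]
  have key : ∀ v : Equiv.Perm (Fin n), IsTau k hk i j v →
      ∀ (x : Fin n) (hx : x ∈ S),
        v x = T.orderEmbOfFin hTcard ((S.orderIsoOfFin hScard).symm ⟨x, hx⟩) := by
    intro v hv x hx
    obtain ⟨hv1, hv2, hv3⟩ := hv
    have hmem : ∀ r : Fin (n - 2), v (S.orderEmbOfFin hScard r) ∈ T := by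
      intro r
      have hr : S.orderEmbOfFin hScard r ∈ S := Finset.orderEmbOfFin_mem _ _ _
      rw [hSmem] at hr
      rw [hTmem]
      refine ⟨fun he => hr.1 (v.injective ?_), fun he => hr.2 (v.injective ?_)⟩
      · rw [he, hv1]
      · rw [he, hv2]
    have hmono : StrictMono (fun r : Fin (n - 2) => v (S.orderEmbOfFin hScard r)) := by
      intro r r' hrr'
      have hr : S.orderEmbOfFin hScard r ∈ S := Finset.orderEmbOfFin_mem _ _ _
      have hr' : S.orderEmbOfFin hScard r' ∈ S := Finset.orderEmbOfFin_mem _ _ _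
      rw [hSmem] at hr hr'
      exact hv3 _ _ ((S.orderEmbOfFin hScard).strictMono hrr') hr.1 hr.2 hr'.1 hr'.2
    have := Finset.orderEmbOfFin_unique hTcard hmem hmono
    have hx' : S.orderEmbOfFin hScard ((S.orderIsoOfFin hScard).symm ⟨x, hx⟩) = x := by
      have : (S.orderIsoOfFin hScard) ((S.orderIsoOfFin hScard).symm ⟨x, hx⟩) = ⟨x, hx⟩ :=
        (S.orderIsoOfFin hScard).apply_symm_apply _
      simp only [Finset.orderEmbOfFin]
      exact congrArg Subtype.val this
    calc v x = v (S.orderEmbOfFin hScard ((S.orderIsoOfFin hScard).symm ⟨x, hx⟩)) := by rw [hx']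
    _ = T.orderEmbOfFin hTcard ((S.orderIsoOfFin hScard).symm ⟨x, hx⟩) := congrFun this _
  apply Equiv.ext
  intro x
  by_cases hx : x ∈ S
  · rw [key w h x hx, key w' h' x hx]
  · rw [hSmem, not_and_or, not_not, not_not] at hx
    rcases hx with rfl | rfl
    · rw [h.1, h'.1]
    · rw [h.2.1, h'.2.1]

/-- For `i < k` and `k+1 < j ≤ n-1`:
`τ^{n,k}_{i,j} = (s_{k-1} s_{k-2} ⋯ s_i) ∘ (s_{k+1} s_{k+2} ⋯ s_{j-1})`. -/
theorem stmt7 (n k i j : ℕ) (hn : 2 ≤ n) (hik : i < k) (hkj : k + 1 < j) (hj : j < n) :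
    ∀ w : Equiv.Perm (Fin n),
      IsTau k (by omega) ⟨i, by omega⟩ ⟨j, hj⟩ w ↔
        w = descProd n (k - 1) i * ascProd n (k + 1) (j - 1) := by
  intro w
  have hfval : ∀ x : Fin n,
      (((descProd n (k - 1) i * ascProd n (k + 1) (j - 1)) x : Fin n) : ℕ) =
        if (x : ℕ) = i then (k : ℕ) else if (x : ℕ) = j then (k : ℕ) + 1
        else if (x : ℕ) < i then (x : ℕ) else if (x : ℕ) ≤ k then (x : ℕ) - 1
        else if (x : ℕ) < j then (x : ℕ) + 1 else (x : ℕ) := by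
    intro x
    rw [Equiv.Perm.mul_apply,
      desc_apply n i (k - 1) (by omega) (by omega) _,
      asc_apply n (k + 1) (j - 1) (by omega) (by omega) x]
    have := x.isLt
    split_ifs <;> omega
  have hftau : IsTau k (by omega) ⟨i, by omega⟩ ⟨j, hj⟩
      (descProd n (k - 1) i * ascProd n (k + 1) (j - 1)) := by
    refine ⟨?_, ?_, ?_⟩
    · apply Fin.ext
      rw [hfval]
      simp only [Fin.val_mk]
      split_ifs <;> omega
    · apply Fin.ext
      rw [hfval]
      simp only [Fin.val_mk]
      split_ifs <;> omega
    · intro s t hst hsi hsj hti htj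
      rw [Fin.lt_def] at hst ⊢
      have hsi' : (s : ℕ) ≠ i := fun hh => hsi (Fin.ext hh)
      have hsj' : (s : ℕ) ≠ j := fun hh => hsj (Fin.ext hh)
      have hti' : (t : ℕ) ≠ i := fun hh => hti (Fin.ext hh)
      have htj' : (t : ℕ) ≠ j := fun hh => htj (Fin.ext hh)
      rw [hfval s, hfval t]
      have := s.isLt
      have := t.isLt
      split_ifs <;> omega
  constructor
  · intro h
    exact tau_unique (by omega) (by simp [Fin.ext_iff]; omega) h hftau
  · rintro rfl
    exact hftau
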